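/- arXiv:2108.12310 — 2 statements merged into one kernel-verified Lean document; each statement's English description precedes it below -/
import Mathlib

section
/- Let λ ∈ ℂ. Then the range of T_n^d(A) − λ is dense in X_1 ⊕ ⋯ ⊕ X_n for every tuple A ∈ B_n if and only if the range of D_i − λ is dense in X_i for every i = 1, …, n. -/
open Cardinal

noncomputable section

namespace OperatorMatrix

variable {Y : Type*} [SeminormedAddCommGroup Y] [NormedSpace ℂ Y]

/-- `α(T)`: the nullity of `T`, i.e. the dimension of its kernel. -/
def nullity (T : Y →L[ℂ] Y) : Cardinal := Module.rank ℂ (LinearMap.ker (T : Y →ₗ[ℂ] Y))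

/-- `β(T)`: the deficiency of `T`, i.e. the dimension of `Y / R(T)`. -/
def deficiency (T : Y →L[ℂ] Y) : Cardinal := Module.rank ℂ (Y ⧸ LinearMap.range (T : Y →ₗ[ℂ] Y))

/-- `T` is left Fredholm: `α(T) < ∞` and `R(T)` is closed. -/
def LeftFredholm (T : Y →L[ℂ] Y) : Prop :=
  nullity T < ℵ₀ ∧ IsClosed (LinearMap.range (T : Y →ₗ[ℂ] Y) : Set Y)

/-- `T` is right Fredholm: `β(T) < ∞`. -/
def RightFredholm (T : Y →L[ℂ] Y) : Prop := deficiency T < ℵ₀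

/-- `T` is Fredholm: both left and right Fredholm. -/
def Fredholm (T : Y →L[ℂ] Y) : Prop := LeftFredholm T ∧ RightFredholm T

/-- `T` is left Weyl: left Fredholm with `ind T = α(T) - β(T) ≤ 0`. -/
def LeftWeyl (T : Y →L[ℂ] Y) : Prop := LeftFredholm T ∧ nullity T ≤ deficiency T

/-- `T` is right Weyl: right Fredholm with `ind T = α(T) - β(T) ≥ 0`. -/
def RightWeyl (T : Y →L[ℂ] Y) : Prop := RightFredholm T ∧ deficiency T ≤ nullity T

/-- The left essential spectrum. -/
def sigmaLe (T : Y →L[ℂ] Y) : Set ℂ := {lam | ¬ LeftFredholm (T - lam • 1)}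

/-- The right essential spectrum. -/
def sigmaRe (T : Y →L[ℂ] Y) : Set ℂ := {lam | ¬ RightFredholm (T - lam • 1)}

/-- The essential spectrum. -/
def sigmaE (T : Y →L[ℂ] Y) : Set ℂ := {lam | ¬ Fredholm (T - lam • 1)}

/-- The left Weyl spectrum. -/
def sigmaLw (T : Y →L[ℂ] Y) : Set ℂ := {lam | ¬ LeftWeyl (T - lam • 1)}

/-- The right Weyl spectrum. -/
def sigmaRw (T : Y →L[ℂ] Y) : Set ℂ := {lam | ¬ RightWeyl (T - lam • 1)}

/-- The complements condition: `N(T)` is complemented (by a closed subspace), and `R(T)` is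
closed and complemented (by a closed subspace). -/
def ComplementsCondition (T : Y →L[ℂ] Y) : Prop :=
  (∃ q : Submodule ℂ Y, IsClosed (q : Set Y) ∧ IsCompl (LinearMap.ker (T : Y →ₗ[ℂ] Y)) q) ∧
    IsClosed (LinearMap.range (T : Y →ₗ[ℂ] Y) : Set Y) ∧
    ∃ q : Submodule ℂ Y, IsClosed (q : Set Y) ∧ IsCompl (LinearMap.range (T : Y →ₗ[ℂ] Y)) q

/-- `T` is (relatively) regular: `T S T = T` for some bounded `S`. -/
def IsRegularOp (T : Y →L[ℂ] Y) : Prop := ∃ S : Y →L[ℂ] Y, T.comp (S.comp T) = T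

/-- `X ⪯ Z`: `X` embeds in `Z`, i.e. there is a left invertible operator `J : X → Z`. -/
def Embeds (X Z : Type*) [SeminormedAddCommGroup X] [SeminormedAddCommGroup Z]
    [NormedSpace ℂ X] [NormedSpace ℂ Z] : Prop :=
  ∃ (J : X →L[ℂ] Z) (L : Z →L[ℂ] X), L.comp J = ContinuousLinearMap.id ℂ X

/-- `X ⪯ₛ Z`: `X` strongly embeds in `Z`: `X ⪯ Z` and there is `J : X → Z` with
`dim (Z / R(J)) < ∞`. -/
def StrongEmbeds (X Z : Type*) [SeminormedAddCommGroup X] [SeminormedAddCommGroup Z]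
    [NormedSpace ℂ X] [NormedSpace ℂ Z] : Prop :=
  Embeds X Z ∧ ∃ J : X →L[ℂ] Z, Module.rank ℂ (Z ⧸ LinearMap.range (J : X →ₗ[ℂ] Z)) < ℵ₀

/-- `X ≺ Z`: `X` essentially embeds in `Z`: `X ⪯ Z` and `Z / R(T)` is infinite dimensional
for every `T : X → Z`. -/
def EssEmbeds (X Z : Type*) [SeminormedAddCommGroup X] [SeminormedAddCommGroup Z]
    [NormedSpace ℂ X] [NormedSpace ℂ Z] : Prop :=
  Embeds X Z ∧ ∀ T : X →L[ℂ] Z, ℵ₀ ≤ Module.rank ℂ (Z ⧸ LinearMap.range (T : X →ₗ[ℂ] Z))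

/-- `X ≅ Z (u.f.d.s.)`: `X` and `Z` are isomorphic up to a finite dimensional subspace. -/
def UFDS (X Z : Type*) [SeminormedAddCommGroup X] [SeminormedAddCommGroup Z]
    [NormedSpace ℂ X] [NormedSpace ℂ Z] : Prop :=
  ∃ (X₁ F₁ : Submodule ℂ X) (Z₁ F₂ : Submodule ℂ Z),
    IsCompl X₁ F₁ ∧ IsCompl Z₁ F₂ ∧ IsClosed (X₁ : Set X) ∧ IsClosed (F₁ : Set X) ∧
      IsClosed (Z₁ : Set Z) ∧ IsClosed (F₂ : Set Z) ∧
      FiniteDimensional ℂ F₁ ∧ FiniteDimensional ℂ F₂ ∧ Nonempty (X₁ ≃L[ℂ] Z₁)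

/-- The upper triangular operator matrix `T_n^d(A)` with diagonal `D` and strictly upper
triangular entries `A i j` (for `i < j`), acting on `X 0 ⊕ ⋯ ⊕ X (n-1)`. -/
def triUpper {n : ℕ} {X : Fin n → Type*} [∀ i, NormedAddCommGroup (X i)]
    [∀ i, NormedSpace ℂ (X i)] (D : ∀ i, X i →L[ℂ] X i)
    (A : ∀ i j, X j →L[ℂ] X i) : (∀ i, X i) →L[ℂ] (∀ i, X i) :=
  ContinuousLinearMap.pi fun i =>
    (D i).comp (ContinuousLinearMap.proj i) +
      ∑ j ∈ Finset.univ.filter (fun j => i < j), (A i j).comp (ContinuousLinearMap.proj j)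

lemma triUpper_apply {n : ℕ} {X : Fin n → Type*} [∀ i, NormedAddCommGroup (X i)]
    [∀ i, NormedSpace ℂ (X i)] (D : ∀ i, X i →L[ℂ] X i)
    (A : ∀ i j, X j →L[ℂ] X i) (x : ∀ i, X i) (i : Fin n) :
    triUpper D A x i = D i (x i) +
      ∑ j ∈ Finset.univ.filter (fun j => i < j), A i j (x j) := by
  simp [triUpper, ContinuousLinearMap.sum_apply]

lemma triUpper_sub_apply {n : ℕ} {X : Fin n → Type*} [∀ i, NormedAddCommGroup (X i)]
    [∀ i, NormedSpace ℂ (X i)] (D : ∀ i, X i →L[ℂ] X i)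
    (A : ∀ i j, X j →L[ℂ] X i) (lam : ℂ) (x : ∀ i, X i) (i : Fin n) :
    (triUpper D A - lam • 1) x i = (D i - lam • 1) (x i) +
      ∑ j ∈ Finset.univ.filter (fun j => i < j), A i j (x j) := by
  simp only [ContinuousLinearMap.sub_apply, ContinuousLinearMap.smul_apply,
    ContinuousLinearMap.one_apply, Pi.sub_apply, Pi.smul_apply, triUpper_apply]
  abel

theorem stmt0 {n : ℕ} (hn : 2 ≤ n) {X : Fin n → Type*}
    [∀ i, NormedAddCommGroup (X i)] [∀ i, NormedSpace ℂ (X i)] [∀ i, CompleteSpace (X i)]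
    (D : ∀ i, X i →L[ℂ] X i) (lam : ℂ) :
    (∀ A : ∀ i j, X j →L[ℂ] X i, DenseRange ⇑(triUpper D A - lam • 1)) ↔
      ∀ i, DenseRange ⇑(D i - lam • 1) := by
  constructor
  · intro h i
    have h0 := h (fun i j => 0)
    have heq : (Function.eval i) ∘ ⇑(triUpper D (fun i j => 0) - lam • 1)
        = ⇑(D i - lam • 1) ∘ (Function.eval i) := by
      funext x
      simp [Function.eval, triUpper_sub_apply, triUpper_apply]
    have hsurj : Function.Surjective (Function.eval i : (∀ j, X j) → X i) :=
      Function.surjective_eval i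
    have hd : DenseRange ((Function.eval i) ∘
        ⇑(triUpper D (fun i j => 0) - lam • 1)) :=
      DenseRange.comp hsurj.denseRange h0 (continuous_apply i)
    rw [heq] at hd
    exact Dense.mono (Set.range_comp_subset_range _ _) hd
  · intro h A
    rw [Metric.denseRange_iff]
    intro y ε hε
    -- build x by downward recursion
    have key : ∀ m : ℕ, ∃ x : ∀ i, X i, ∀ i : Fin n, n - m ≤ (i : ℕ) →
        ‖(D i - lam • 1) (x i) +
          (∑ j ∈ Finset.univ.filter (fun j => i < j), A i j (x j)) - y i‖ < ε := by
      intro m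
      induction m with
      | zero =>
        refine ⟨0, fun i hi => ?_⟩
        exact absurd hi (by omega)
      | succ m ih =>
        obtain ⟨x, hx⟩ := ih
        by_cases hm : n ≤ m
        · exact ⟨x, fun i hi => hx i (by omega)⟩
        · push_neg at hm
          set k : Fin n := ⟨n - m - 1, by omega⟩ with hk
          set s := ∑ j ∈ Finset.univ.filter (fun j => k < j), A k j (x j) with hs
          obtain ⟨u, hu⟩ := Metric.denseRange_iff.mp (h k) (y k - s) ε hε
          refine ⟨Function.update x k u, fun i hi => ?_⟩
          by_cases hik : i = k
          · rw [hik]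
            have hupd : ∀ j ∈ Finset.univ.filter (fun j => k < j),
                A k j (Function.update x k u j) = A k j (x j) := by
              intro j hj
              have : k < j := (Finset.mem_filter.mp hj).2
              rw [Function.update_of_ne (by exact this.ne')]
            rw [Finset.sum_congr rfl hupd, Function.update_self]
            have hb : ‖(y k - s) - (D k - lam • 1) u‖ < ε := by
              rwa [dist_eq_norm] at hu
            calc ‖(D k - lam • 1) u + s - y k‖
                = ‖(y k - s) - (D k - lam • 1) u‖ := by rw [← norm_neg]; congr 1; abel
              _ < ε := hb
          · have hik' : (i : ℕ) ≠ n - m - 1 := fun hc => hik (Fin.ext hc)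
            have hi' : n - m ≤ (i : ℕ) := by omega
            have hupd : ∀ j ∈ Finset.univ.filter (fun j => i < j),
                A i j (Function.update x k u j) = A i j (x j) := by
              intro j hj
              have hij : i < j := (Finset.mem_filter.mp hj).2
              have : j ≠ k := by
                intro hc
                have : (j : ℕ) = n - m - 1 := by rw [hc]
                have : (i : ℕ) < (j : ℕ) := hij
                omega
              rw [Function.update_of_ne this]
            rw [Finset.sum_congr rfl hupd, Function.update_of_ne hik]
            exact hx i hi'
    obtain ⟨x, hx⟩ := key n
    refine ⟨x, ?_⟩
    rw [dist_pi_lt_iff hε]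
    intro i
    have := hx i (by omega)
    rw [dist_eq_norm, triUpper_sub_apply]
    calc ‖y i - ((D i - lam • 1) (x i) +
          ∑ j ∈ Finset.univ.filter (fun j => i < j), A i j (x j))‖
        = ‖(D i - lam • 1) (x i) +
          (∑ j ∈ Finset.univ.filter (fun j => i < j), A i j (x j)) - y i‖ := by
          rw [← norm_neg]; congr 1; abel
      _ < ε := this

end OperatorMatrix
end
end

section
/- If Banach spaces X and Y are isomorphic up to a finite dimensional subspace, then at least one of them can be strongly embedded into the other: X ⪯_s Y or Y ⪯_s X. -/
open Cardinal

noncomputable section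

namespace OperatorMatrix

variable {Y : Type*} [SeminormedAddCommGroup Y] [NormedSpace ℂ Y]

/-- Auxiliary: if `X = X₁ ⊕ F₁`, `Y = Y₁ ⊕ F₂` with `X₁ ≃L Y₁`, both `F`'s finite
dimensional and `finrank F₁ ≤ finrank F₂`, then `X` strongly embeds in `Y`. -/
theorem strongEmbeds_of_data {X Y : Type*} [NormedAddCommGroup X] [NormedSpace ℂ X]
    [CompleteSpace X] [NormedAddCommGroup Y] [NormedSpace ℂ Y] [CompleteSpace Y]
    (X₁ F₁ : Submodule ℂ X) (Y₁ F₂ : Submodule ℂ Y)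
    (hcX : IsCompl X₁ F₁) (hcY : IsCompl Y₁ F₂)
    (hX₁ : IsClosed (X₁ : Set X)) (hF₁ : IsClosed (F₁ : Set X))
    (hY₁ : IsClosed (Y₁ : Set Y)) (hF₂ : IsClosed (F₂ : Set Y))
    (_ : FiniteDimensional ℂ F₁) (_ : FiniteDimensional ℂ F₂)
    (g : X₁ ≃L[ℂ] Y₁)
    (hdim : Module.finrank ℂ F₁ ≤ Module.finrank ℂ F₂) :
    StrongEmbeds X Y := by
  classical
  set m := Module.finrank ℂ F₁
  set k := Module.finrank ℂ F₂
  let b₁ : Module.Basis (Fin m) ℂ F₁ := Module.finBasis ℂ F₁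
  let b₂ : Module.Basis (Fin k) ℂ F₂ := Module.finBasis ℂ F₂
  let s : Fin m → Fin k := Fin.castLE hdim
  have hs : Function.Injective s := Fin.castLE_injective hdim
  -- embedding of F₁ into F₂ and its left inverse
  let ι₀ : F₁ →ₗ[ℂ] F₂ :=
    (b₂.equivFun.symm.toLinearMap.comp (Function.ExtendByZero.linearMap ℂ s)).comp
      b₁.equivFun.toLinearMap
  let π₀ : F₂ →ₗ[ℂ] F₁ :=
    (b₁.equivFun.symm.toLinearMap.comp (LinearMap.funLeft ℂ ℂ s)).comp
      b₂.equivFun.toLinearMap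
  have hπι : ∀ v : F₁, π₀ (ι₀ v) = v := by
    intro v
    simp only [ι₀, π₀, LinearMap.comp_apply, LinearEquiv.coe_coe]
    have : LinearMap.funLeft ℂ ℂ s (Function.ExtendByZero.linearMap ℂ s (b₁.equivFun v))
        = b₁.equivFun v := by
      ext i
      simp [LinearMap.funLeft, Function.ExtendByZero.linearMap,
        hs.extend_apply]
      exact hs.extend_apply _ _ _
    rw [LinearEquiv.apply_symm_apply, this, LinearEquiv.symm_apply_apply]
  let ι : F₁ →L[ℂ] F₂ := LinearMap.toContinuousLinearMap ι₀
  let π : F₂ →L[ℂ] F₁ := LinearMap.toContinuousLinearMap π₀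
  let e : (X₁ × F₁) ≃L[ℂ] X := X₁.prodEquivOfClosedCompl F₁ hcX hX₁ hF₁
  let f : (Y₁ × F₂) ≃L[ℂ] Y := Y₁.prodEquivOfClosedCompl F₂ hcY hY₁ hF₂
  let J : X →L[ℂ] Y :=
    (f : (Y₁ × F₂) →L[ℂ] Y).comp
      (((g : X₁ →L[ℂ] Y₁).prodMap ι).comp (e.symm : X →L[ℂ] (X₁ × F₁)))
  let L : Y →L[ℂ] X :=
    (e : (X₁ × F₁) →L[ℂ] X).comp
      (((g.symm : Y₁ →L[ℂ] X₁).prodMap π).comp (f.symm : Y →L[ℂ] (Y₁ × F₂)))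
  have hLJ : L.comp J = ContinuousLinearMap.id ℂ X := by
    ext x
    simp only [L, J, ContinuousLinearMap.comp_apply, ContinuousLinearEquiv.coe_coe,
      ContinuousLinearMap.coe_prodMap', Prod.map_apply,
      ContinuousLinearMap.id_apply]
    rw [ContinuousLinearEquiv.symm_apply_apply]
    have h2 : π (ι (e.symm x).2) = (e.symm x).2 := hπι _
    have h1 : g.symm (g (e.symm x).1) = (e.symm x).1 := g.symm_apply_apply _
    show e (g.symm (g (e.symm x).1), π (ι (e.symm x).2)) = x
    rw [h1, h2]
    calc e ((e.symm x).1, (e.symm x).2) = e (e.symm x) := by rfl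
      _ = x := e.apply_symm_apply x
  -- Y₁ is contained in the range of J
  have hY₁le : Y₁ ≤ LinearMap.range (J : X →ₗ[ℂ] Y) := by
    intro y hy
    refine ⟨e (g.symm ⟨y, hy⟩, 0), ?_⟩
    show f (((g : X₁ →L[ℂ] Y₁).prodMap ι) (e.symm (e (g.symm ⟨y, hy⟩, 0)))) = y
    rw [ContinuousLinearEquiv.symm_apply_apply]
    simp only [ContinuousLinearMap.coe_prodMap', Prod.map_apply,
      ContinuousLinearEquiv.coe_coe, map_zero]
    rw [g.apply_symm_apply]
    show f (⟨y, hy⟩, 0) = y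
    simp [f, Submodule.coe_prodEquivOfClosedCompl, Submodule.coe_prodEquivOfIsCompl']
  constructor
  · exact ⟨J, L, hLJ⟩
  · refine ⟨J, ?_⟩
    have hsurj : Function.Surjective
        (Submodule.mapQ Y₁ (LinearMap.range (J : X →ₗ[ℂ] Y)) LinearMap.id
          (by simpa using hY₁le)) := by
      intro z
      obtain ⟨w, rfl⟩ := Submodule.mkQ_surjective _ z
      exact ⟨Submodule.Quotient.mk w, by simp [Submodule.mapQ_apply]⟩
    have h1 : Module.rank ℂ (Y ⧸ LinearMap.range (J : X →ₗ[ℂ] Y))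
        ≤ Module.rank ℂ (Y ⧸ Y₁) :=
      LinearMap.rank_le_of_surjective _ hsurj
    have h2 : Module.rank ℂ (Y ⧸ Y₁) = Module.rank ℂ F₂ :=
      (Submodule.quotientEquivOfIsCompl Y₁ F₂ hcY).rank_eq
    calc Module.rank ℂ (Y ⧸ LinearMap.range (J : X →ₗ[ℂ] Y)) ≤ Module.rank ℂ F₂ := h1.trans h2.le
      _ < ℵ₀ := Module.rank_lt_aleph0 ℂ F₂

theorem stmt8 (X Y : Type*) [NormedAddCommGroup X] [NormedSpace ℂ X]
    [CompleteSpace X] [NormedAddCommGroup Y] [NormedSpace ℂ Y] [CompleteSpace Y]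
    (h : UFDS X Y) : StrongEmbeds X Y ∨ StrongEmbeds Y X := by
  obtain ⟨X₁, F₁, Y₁, F₂, hcX, hcY, hX₁, hF₁, hY₁, hF₂, hfd₁, hfd₂, ⟨g⟩⟩ := h
  by_cases hdim : Module.finrank ℂ F₁ ≤ Module.finrank ℂ F₂
  · exact Or.inl (strongEmbeds_of_data X₁ F₁ Y₁ F₂ hcX hcY hX₁ hF₁ hY₁ hF₂ hfd₁ hfd₂ g hdim)
  · exact Or.inr (strongEmbeds_of_data Y₁ F₂ X₁ F₁ hcY hcX hY₁ hF₂ hX₁ hF₁ hfd₂ hfd₁ g.symm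
      (le_of_not_ge hdim))

end OperatorMatrix
end
end
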